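/- Let ψ₁, ψ₂ : ℝ⁴ → Cl be differentiable maps, and K¹_μ, K²_μ : ℝ⁴ → Cl (μ ∈ {0,1,2,3}) maps such that ∂_μψ₁ = K¹_μ·ψ₁ and ∂_μψ₂ = K²_μ·ψ₂ for all μ, and suppose reverse(ψ₁(x))·ψ₁(x) = 1 for all x. Then the product ψ₁ψ₂ satisfies ∂_μ(ψ₁ψ₂) = ( K¹_μ + ψ₁·K²_μ·reverse(ψ₁) )·(ψ₁ψ₂) for all μ. (The product of two Killing spin fields is again a Killing spin field, with coefficient K¹ + ψ₁K²ψ̃₁.) -/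
import Mathlib


open CliffordAlgebra
open scoped symmDiff

noncomputable section

/-- The Minkowski signs `(-1,1,…,1)` on `ℝ^{10}`. -/
def ηv : Fin 10 → ℝ := fun I => if I = 0 then -1 else 1

/-- The Minkowski metric `η = diag(-1,1,…,1)` as a matrix. -/
def ηm : Fin 10 → Fin 10 → ℝ := fun I J => if I = J then ηv I else 0

/-- The Minkowski quadratic form `Q(x) = -x₀² + x₁² + ⋯ + x₉²` on `ℝ^{10}`. -/
def Qm : QuadraticForm ℝ (Fin 10 → ℝ) := QuadraticMap.weightedSumSquares ℝ ηv

/-- The Clifford algebra of the Minkowski form on `ℝ^{10}`. -/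
abbrev Cl := CliffordAlgebra Qm

/-- The images `e_I` of the standard basis vectors of `ℝ^{10}` in `Cl`. -/
def e (I : Fin 10) : Cl := ι Qm (Pi.single I 1)

/-- Inclusion of tangent indices `{0,…,3}` into `{0,…,9}`. -/
def tIdx (μ : Fin 4) : Fin 10 := ⟨μ.1, by omega⟩

/-- Inclusion of normal indices `{4,…,9}` into `{0,…,9}`. -/
def nIdx (i : Fin 6) : Fin 10 := ⟨i.1 + 4, by omega⟩

lemma Qm_apply (v : Fin 10 → ℝ) : Qm v = ∑ i, ηv i * (v i * v i) := by
  simp [Qm, QuadraticMap.weightedSumSquares_apply, smul_eq_mul]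

lemma Qm_single (I : Fin 10) : Qm (Pi.single I 1) = ηv I := by
  rw [Qm_apply]
  rw [Finset.sum_eq_single I] <;> simp_all [Pi.single_apply]

lemma e_sq (I : Fin 10) : e I * e I = algebraMap ℝ Cl (ηv I) := by
  rw [e, ι_sq_scalar, Qm_single]

lemma e_anticomm {I J : Fin 10} (h : I ≠ J) : e I * e J = - (e J * e I) := by
  have ho : Qm.IsOrtho (Pi.single I 1) (Pi.single J 1) := by
    rw [QuadraticMap.isOrtho_def, Qm_apply, Qm_apply, Qm_apply, ← Finset.sum_add_distrib]
    apply Finset.sum_congr rfl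
    intro i _
    by_cases hI : i = I <;> by_cases hJ : i = J <;> simp_all [Pi.single_apply]
  have h2 := ι_mul_ι_add_swap_of_isOrtho (Q := Qm) ho
  rw [e, e, eq_neg_iff_add_eq_zero, h2]

/-- The basis monomials. -/
def fB (s : Finset (Fin 10)) : Cl := ((s.sort (· ≤ ·)).map e).prod

lemma fB_empty : fB ∅ = 1 := by simp [fB]

lemma fB_insert {J : Fin 10} {t : Finset (Fin 10)} (h : ∀ i ∈ t, J < i) :
    fB (insert J t) = e J * fB t := by
  have hJ : J ∉ t := fun hmem => lt_irrefl J (h J hmem)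
  rw [fB, fB, Finset.sort_insert _ (fun b hb => (h b hb).le) hJ, List.map_cons, List.prod_cons]

lemma fB_single (I : Fin 10) : fB {I} = e I := by
  have : ({I} : Finset (Fin 10)) = insert I ∅ := by simp
  rw [this, fB_insert (by simp), fB_empty, mul_one]

lemma key (s : Finset (Fin 10)) : ∀ I : Fin 10, ∃ c : ℝ, e I * fB s = c • fB ({I} ∆ s) := by
  induction s using Finset.strongInduction with
  | _ s ih =>
    intro I
    rcases s.eq_empty_or_nonempty with rfl | hs
    · refine ⟨1, ?_⟩
      have h0 : ({I} ∆ (∅ : Finset (Fin 10))) = {I} := by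
        ext x; simp [Finset.mem_symmDiff]
      rw [h0, fB_single, fB_empty, mul_one, one_smul]
    · set J := s.min' hs with hJ
      have hJs : J ∈ s := s.min'_mem hs
      set s' := s.erase J with hs'
      have hmin : ∀ i ∈ s', J < i := fun i hi =>
        lt_of_le_of_ne (s.min'_le i (Finset.mem_of_mem_erase hi))
          (Ne.symm (Finset.ne_of_mem_erase hi))
      have hseq : s = insert J s' := by rw [hs', Finset.insert_erase hJs]
      have hfs : fB s = e J * fB s' := by rw [hseq, fB_insert hmin]
      rcases lt_trichotomy I J with hIJ | rfl | hIJ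
      · -- I < J : I ∉ s
        have hIs : I ∉ s := fun hmem => absurd (s.min'_le I hmem) (by simp [← hJ]; exact hIJ)
        have hins : ({I} ∆ s) = insert I s := by
          ext x
          simp only [Finset.mem_symmDiff, Finset.mem_insert, Finset.mem_singleton]
          constructor
          · rintro (⟨rfl, -⟩ | ⟨hxs, -⟩)
            · exact Or.inl rfl
            · exact Or.inr hxs
          · rintro (rfl | hxs)
            · exact Or.inl ⟨rfl, hIs⟩
            · exact Or.inr ⟨hxs, fun h => hIs (h ▸ hxs)⟩
        refine ⟨1, ?_⟩
        rw [hins, fB_insert (fun i hi => lt_of_lt_of_le hIJ (s.min'_le i hi)), one_smul]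
      · -- I = J
        have hers : ({J} ∆ s) = s' := by
          ext x
          simp only [Finset.mem_symmDiff, Finset.mem_singleton, hs', Finset.mem_erase]
          constructor
          · rintro (⟨rfl, hxs⟩ | ⟨hxs, hxJ⟩)
            · exact absurd hJs hxs
            · exact ⟨hxJ, hxs⟩
          · rintro ⟨hxJ, hxs⟩
            exact Or.inr ⟨hxs, hxJ⟩
        refine ⟨ηv J, ?_⟩
        rw [hfs, ← mul_assoc, e_sq, hers, Algebra.algebraMap_eq_smul_one, smul_mul_assoc, one_mul]
      · -- I > J
        have hne : I ≠ J := ne_of_gt hIJ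
        obtain ⟨c, hc⟩ := ih s' (Finset.erase_ssubset hJs) I
        have hsub : ∀ i ∈ ({I} ∆ s'), J < i := by
          intro i hi
          rw [Finset.mem_symmDiff] at hi
          rcases hi with ⟨hi, -⟩ | ⟨hi, -⟩
          · simp at hi; subst hi; exact hIJ
          · exact hmin i hi
        have hJns : J ∉ s' := by simp [hs']
        have hset : ({I} ∆ s) = insert J ({I} ∆ s') := by
          ext x
          simp only [Finset.mem_symmDiff, Finset.mem_insert, Finset.mem_singleton]
          constructor
          · rintro (⟨rfl, hxs⟩ | ⟨hxs, hxI⟩)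
            · exact Or.inr (Or.inl ⟨rfl, fun h => hxs (hseq ▸ Finset.mem_insert_of_mem h)⟩)
            · rw [hseq, Finset.mem_insert] at hxs
              rcases hxs with rfl | hxs
              · exact Or.inl rfl
              · exact Or.inr (Or.inr ⟨hxs, hxI⟩)
          · rintro (rfl | ⟨rfl, hxs⟩ | ⟨hxs, hxI⟩)
            · exact Or.inr ⟨hJs, hne.symm⟩
            · refine Or.inl ⟨rfl, fun h => hxs ?_⟩
              rw [hseq, Finset.mem_insert] at h
              rcases h with h | h
              · exact absurd h hne
              · exact h
            · exact Or.inr ⟨hseq ▸ Finset.mem_insert_of_mem hxs, hxI⟩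
        refine ⟨-c, ?_⟩
        rw [hfs, ← mul_assoc, e_anticomm hne, neg_mul, mul_assoc, hc, hset,
          fB_insert hsub, mul_smul_comm, neg_smul]

lemma mem_span_fB (x : Cl) : x ∈ Submodule.span ℝ (Set.range fB) := by
  induction x using CliffordAlgebra.left_induction with
  | algebraMap r =>
    rw [Algebra.algebraMap_eq_smul_one, ← fB_empty]
    exact Submodule.smul_mem _ _ (Submodule.subset_span ⟨∅, rfl⟩)
  | add x y hx hy => exact Submodule.add_mem _ hx hy
  | ι_mul x m hx =>
    have he : ∀ (I : Fin 10) (y : Cl), y ∈ Submodule.span ℝ (Set.range fB) →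
        e I * y ∈ Submodule.span ℝ (Set.range fB) := by
      intro I y hy
      induction hy using Submodule.span_induction with
      | mem z hz =>
        obtain ⟨s, rfl⟩ := hz
        obtain ⟨c, hc⟩ := key s I
        rw [hc]
        exact Submodule.smul_mem _ _ (Submodule.subset_span ⟨_, rfl⟩)
      | zero => simp
      | add a b _ _ ha hb => rw [mul_add]; exact Submodule.add_mem _ ha hb
      | smul c a _ ha => rw [mul_smul_comm]; exact Submodule.smul_mem _ _ ha
    have hm : (m : Fin 10 → ℝ) = ∑ I, m I • (Pi.single I 1 : Fin 10 → ℝ) := by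
      ext J; simp [Pi.single_apply]
    rw [hm, map_sum]
    rw [Finset.sum_mul]
    apply Submodule.sum_mem
    intro I _
    rw [map_smul, smul_mul_assoc]
    exact Submodule.smul_mem _ _ (he I x hx)

instance : Module.Finite ℝ Cl := by
  refine ⟨⟨(Set.finite_range fB).toFinset, ?_⟩⟩
  rw [Set.Finite.coe_toFinset, eq_top_iff]
  exact fun x _ => mem_span_fB x

set_option maxHeartbeats 1000000 in
/-- The product of two Killing spin fields is again a Killing spin field, with coefficient
`K¹_μ + ψ₁·K²_μ·reverse(ψ₁)`. -/
theorem stmt_6 (nCl : AddGroupNorm Cl)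
    (hns : ∀ (c : ℝ) (x : Cl), nCl (c • x) ≤ ‖c‖ * nCl x) :
    letI : NormedAddCommGroup Cl := nCl.toNormedAddCommGroup
    letI : NormedSpace ℝ Cl := { norm_smul_le := hns }
    ∀ (ψ₁ ψ₂ : (Fin 4 → ℝ) → Cl) (K₁ K₂ : Fin 4 → (Fin 4 → ℝ) → Cl),
      Differentiable ℝ ψ₁ →
      Differentiable ℝ ψ₂ →
      (∀ μ x, fderiv ℝ ψ₁ x (Pi.single μ 1) = K₁ μ x * ψ₁ x) →
      (∀ μ x, fderiv ℝ ψ₂ x (Pi.single μ 1) = K₂ μ x * ψ₂ x) →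
      (∀ x, reverse (Q := Qm) (ψ₁ x) * ψ₁ x = 1) →
      ∀ (μ : Fin 4) (x : Fin 4 → ℝ),
        fderiv ℝ (fun y => ψ₁ y * ψ₂ y) x (Pi.single μ 1) =
          (K₁ μ x + ψ₁ x * K₂ μ x * reverse (Q := Qm) (ψ₁ x)) * (ψ₁ x * ψ₂ x) := by
  intro ψ₁ ψ₂ K₁ K₂ hd₁ hd₂ hK₁ hK₂ hrev μ x
  letI : NormedAddCommGroup Cl := nCl.toNormedAddCommGroup
  letI : NormedSpace ℝ Cl := { norm_smul_le := hns }
  haveI : FiniteDimensional ℝ Cl := inferInstance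
  let B : Cl →ₗ[ℝ] Cl →L[ℝ] Cl :=
    { toFun := fun a => LinearMap.toContinuousLinearMap (LinearMap.mul ℝ Cl a)
      map_add' := by intro a b; ext z; simp [add_mul]
      map_smul' := by intro c a; ext z; simp [smul_mul_assoc] }
  let Bc : Cl →L[ℝ] Cl →L[ℝ] Cl := LinearMap.toContinuousLinearMap B
  have hfd : fderiv ℝ (fun y => ψ₁ y * ψ₂ y) x =
      Bc.precompR (Fin 4 → ℝ) (ψ₁ x) (fderiv ℝ ψ₂ x) +
        Bc.precompL (Fin 4 → ℝ) (fderiv ℝ ψ₁ x) (ψ₂ x) :=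
    Bc.fderiv_of_bilinear (hd₁ x) (hd₂ x)
  rw [hfd]
  have hBc : ∀ a b : Cl, Bc a b = a * b := fun a b => rfl
  simp only [ContinuousLinearMap.add_apply, ContinuousLinearMap.precompR_apply,
    ContinuousLinearMap.precompL_apply, ContinuousLinearMap.compL_apply,
    ContinuousLinearMap.coe_comp', Function.comp_apply, hK₁, hK₂, hBc]
  have hr := hrev x
  have h2 : ψ₁ x * K₂ μ x * reverse (Q := Qm) (ψ₁ x) * (ψ₁ x * ψ₂ x)
      = ψ₁ x * (K₂ μ x * ψ₂ x) := by
    rw [mul_assoc (ψ₁ x * K₂ μ x), ← mul_assoc (reverse (Q := Qm) (ψ₁ x)), hr, one_mul,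
      mul_assoc]
  rw [add_mul, h2]
  noncomm_ring
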